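/- Let 0 ≤ β < 1, and let n, b, k be positive integers with k·b = n. Then the square root factor C_{1,β} satisfies sens_{k,b}(C_{1,β})² ≤ k·(log n + 1)/(1 − β)² + 6·k²/(1 − β)², where log is the natural logarithm. -/

import Mathlib

open Finset Matrix
/-- `r_m = (1/4^m)·C(2m,m)`. -/
noncomputable def rCoef (m : ℕ) : ℝ := (1 / 4 ^ m) * (Nat.choose (2 * m) m : ℝ)

lemma rCoef_pos (m : ℕ) : 0 < rCoef m := by
  unfold rCoef
  have : 0 < Nat.choose (2 * m) m := Nat.choose_pos (by omega)
  have : (0:ℝ) < (Nat.choose (2 * m) m : ℝ) := by exact_mod_cast this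
  positivity

lemma rCoef_zero : rCoef 0 = 1 := by simp [rCoef]

lemma rCoef_succ (m : ℕ) : rCoef (m + 1) = rCoef m * ((2 * m + 1) / (2 * m + 2)) := by
  have h := Nat.succ_mul_centralBinom_succ m
  have h2 : ((m:ℝ) + 1) * (Nat.centralBinom (m+1) : ℝ) = 2 * (2 * m + 1) * (Nat.centralBinom m : ℝ) := by
    exact_mod_cast congrArg (Nat.cast : ℕ → ℝ) h
  have hc : ∀ j, (Nat.choose (2*j) j : ℝ) = (Nat.centralBinom j : ℝ) := by
    intro j; rw [Nat.centralBinom]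
  have hm1 : ((m:ℝ) + 1) ≠ 0 := by positivity
  have hcb : (Nat.centralBinom (m+1) : ℝ) = 2 * (2*m+1) * (Nat.centralBinom m : ℝ) / (m+1) := by
    field_simp; linarith [h2]
  unfold rCoef
  rw [hc, hc, hcb]
  have h4 : (4:ℝ) ^ (m+1) = 4 * 4 ^ m := by ring
  rw [h4]
  field_simp
  ring

lemma ratio_le (x y : ℕ) (h : x ≤ y) :
    ((2*(x:ℝ)+1)/(2*x+2)) ≤ ((2*(y:ℝ)+1)/(2*y+2)) := by
  have hx : (0:ℝ) < 2*x+2 := by positivity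
  have hy : (0:ℝ) < 2*y+2 := by positivity
  rw [div_le_div_iff₀ hx hy]
  have : (x:ℝ) ≤ y := by exact_mod_cast h
  nlinarith

lemma rCoef_le_one (m : ℕ) : rCoef m ≤ 1 := by
  induction m with
  | zero => simp [rCoef_zero]
  | succ m ih =>
    rw [rCoef_succ]
    have h1 : ((2*(m:ℝ)+1)/(2*m+2)) ≤ 1 := by
      rw [div_le_one (by positivity)]; linarith
    have := rCoef_pos m
    nlinarith

lemma rCoef_mul_le (a c : ℕ) : rCoef a * rCoef c ≤ rCoef (a + c) := by
  induction c with
  | zero => simp [rCoef_zero]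
  | succ c ih =>
    have h1 : a + (c+1) = (a + c) + 1 := by omega
    rw [h1]
    have h2 := ratio_le c (a+c) (by omega)
    have h3 := rCoef_pos (a+c)
    have h6 : (0:ℝ) < (2*(c:ℝ)+1)/(2*c+2) := by positivity
    calc rCoef a * rCoef (c+1)
        = (rCoef a * rCoef c) * ((2*(c:ℝ)+1)/(2*c+2)) := by rw [rCoef_succ]; ring
      _ ≤ rCoef (a+c) * ((2*(c:ℝ)+1)/(2*c+2)) := mul_le_mul_of_nonneg_right ih h6.le
      _ ≤ rCoef (a+c) * ((2*((a+c:ℕ):ℝ)+1)/(2*((a+c:ℕ):ℝ)+2)) := mul_le_mul_of_nonneg_left h2 h3.le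
      _ = rCoef ((a+c)+1) := (rCoef_succ (a+c)).symm

lemma rCoef_sq_le (m : ℕ) : rCoef m ^ 2 ≤ 1 / (m + 1) := by
  induction m with
  | zero => simp [rCoef_zero]
  | succ m ih =>
    rw [rCoef_succ]
    have h3 := rCoef_pos m
    have key : ((2*(m:ℝ)+1)/(2*m+2))^2 * (1/(m+1)) ≤ 1/(m+2) := by
      have he : ((2*(m:ℝ)+1)/(2*m+2))^2 * (1/(m+1)) = (2*(m:ℝ)+1)^2 / ((2*m+2)^2*(m+1)) := by
        field_simp
      rw [he, div_le_div_iff₀ (by positivity) (by positivity)]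
      nlinarith [sq_nonneg ((m:ℝ))]
    calc (rCoef m * ((2*(m:ℝ)+1)/(2*m+2)))^2
        = rCoef m ^2 * ((2*(m:ℝ)+1)/(2*m+2))^2 := by ring
      _ ≤ (1/(m+1)) * ((2*(m:ℝ)+1)/(2*m+2))^2 := by
          apply mul_le_mul_of_nonneg_right ih (by positivity)
      _ ≤ 1/(m+2) := by rw [mul_comm]; exact key
      _ = 1/(((m+1:ℕ):ℝ)+1) := by push_cast; ring

lemma rCoef_le_inv_sqrt (m : ℕ) : rCoef m ≤ 1 / Real.sqrt (m + 1) := by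
  have h1 := rCoef_sq_le m
  have h2 := rCoef_pos m
  rw [← Real.sqrt_sq (le_of_lt h2), one_div, ← Real.sqrt_inv]
  apply Real.sqrt_le_sqrt
  rw [← one_div]
  exact h1

/-- `c_m = Σ_{i=0}^{m} r_{m−i} r_i β^i` (the `α = 1` case). -/
noncomputable def cCoef1 (β : ℝ) (m : ℕ) : ℝ :=
  ∑ i ∈ Finset.range (m + 1), rCoef (m - i) * rCoef i * β ^ i

lemma cCoef1_nonneg (β : ℝ) (hβ0 : 0 ≤ β) (m : ℕ) : 0 ≤ cCoef1 β m := by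
  apply Finset.sum_nonneg
  intro i _
  have := rCoef_pos (m-i); have := rCoef_pos i
  positivity

lemma cCoef1_le (β : ℝ) (hβ0 : 0 ≤ β) (hβ1 : β < 1) (m : ℕ) :
    cCoef1 β m ≤ rCoef m / (1 - β) := by
  have hβ' : 0 < 1 - β := by linarith
  calc cCoef1 β m ≤ ∑ i ∈ Finset.range (m + 1), rCoef m * β ^ i := by
        apply Finset.sum_le_sum
        intro i hi
        rw [Finset.mem_range] at hi
        have h1 : rCoef (m - i) * rCoef i ≤ rCoef m := by
          have := rCoef_mul_le (m - i) i
          rwa [Nat.sub_add_cancel (by omega)] at this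
        have : (0:ℝ) ≤ β ^ i := by positivity
        nlinarith
    _ = rCoef m * ∑ i ∈ Finset.range (m + 1), β ^ i := by rw [Finset.mul_sum]
    _ ≤ rCoef m * (1 / (1 - β)) := by
        apply mul_le_mul_of_nonneg_left _ (rCoef_pos m).le
        rw [geom_sum_eq (ne_of_lt hβ1)]
        have he : (β^(m+1)-1)/(β-1) = (1-β^(m+1))/(1-β) := by
          rw [← neg_div_neg_eq]; ring_nf
        rw [he, div_le_div_iff₀ hβ' hβ']
        have hp : 0 ≤ β ^ (m+1) := by positivity
        nlinarith
    _ = rCoef m / (1 - β) := by ring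

lemma cCoef1_le_inv_sqrt (β : ℝ) (hβ0 : 0 ≤ β) (hβ1 : β < 1) (m : ℕ) :
    cCoef1 β m ≤ 1 / ((1 - β) * Real.sqrt (m + 1)) := by
  have hβ' : 0 < 1 - β := by linarith
  have hs : 0 < Real.sqrt (m + 1) := Real.sqrt_pos.mpr (by positivity)
  calc cCoef1 β m ≤ rCoef m / (1 - β) := cCoef1_le β hβ0 hβ1 m
    _ ≤ (1 / Real.sqrt (m+1)) / (1 - β) := by
        gcongr
        exact rCoef_le_inv_sqrt m
    _ = 1 / ((1 - β) * Real.sqrt (m + 1)) := by field_simp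

lemma harmonic_le (n : ℕ) (hn : 1 ≤ n) :
    ∑ m ∈ Finset.range n, (1:ℝ)/(m+1) ≤ Real.log n + 1 := by
  induction n with
  | zero => omega
  | succ n ih =>
    rcases Nat.eq_or_lt_of_le hn with h | h
    · simp [← h]
    · have hn' : 1 ≤ n := by omega
      have hnp : (0:ℝ) < n := by exact_mod_cast hn'
      rw [Finset.sum_range_succ]
      have key : (1:ℝ)/(n+1) ≤ Real.log (n+1) - Real.log n := by
        rw [← Real.log_div (by positivity) (by positivity)]
        have h2 : Real.log ((n:ℝ)/(n+1)) ≤ (n:ℝ)/(n+1) - 1 :=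
          Real.log_le_sub_one_of_pos (by positivity)
        have h3 : Real.log ((n:ℝ)/(n+1)) = - Real.log ((n+1:ℝ)/n) := by
          rw [← Real.log_inv]; congr 1; field_simp
        rw [h3] at h2
        have : (n:ℝ)/(n+1) - 1 = -(1/(n+1)) := by field_simp; ring
        rw [this] at h2
        linarith
      have := ih hn'
      push_cast
      push_cast at this
      linarith

lemma invsqrt_sum_le (n : ℕ) :
    ∑ m ∈ Finset.range n, 1 / Real.sqrt (m+1) ≤ 2 * Real.sqrt n := by
  induction n with
  | zero => simp
  | succ n ih =>
    rw [Finset.sum_range_succ]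
    have h1 : Real.sqrt n ≤ Real.sqrt (n+1) := by
      apply Real.sqrt_le_sqrt; push_cast; linarith
    have h2 : 0 < Real.sqrt ((n:ℝ)+1) := Real.sqrt_pos.mpr (by positivity)
    have h3 : Real.sqrt ((n:ℝ)+1) * Real.sqrt ((n:ℝ)+1) = (n:ℝ)+1 :=
      Real.mul_self_sqrt (by positivity)
    have key : 1 / Real.sqrt ((n:ℝ)+1) ≤ 2 * Real.sqrt ((n:ℝ)+1) - 2 * Real.sqrt n := by
      rw [div_le_iff₀ h2]
      have h4 : Real.sqrt n * Real.sqrt n = (n:ℝ) := Real.mul_self_sqrt (by positivity)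
      have h5 : Real.sqrt n * Real.sqrt (n+1) ≤ (n:ℝ) + 1/2 := by
        nlinarith [sq_nonneg (Real.sqrt ((n:ℝ)+1) - Real.sqrt n)]
      nlinarith
    have hc : ((n+1:ℕ):ℝ) = (n:ℝ)+1 := by push_cast; ring
    rw [hc]
    linarith

lemma sqrtsum_le (K : ℕ) :
    ∑ l ∈ Finset.range K, Real.sqrt l ≤ (2/3) * K * Real.sqrt K := by
  induction K with
  | zero => simp
  | succ K ih =>
    rw [Finset.sum_range_succ]
    have h1 : Real.sqrt K ≤ Real.sqrt (K+1) := by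
      apply Real.sqrt_le_sqrt; push_cast; linarith
    have h2 : 0 ≤ Real.sqrt ((K:ℝ)+1) := Real.sqrt_nonneg _
    have h0 : 0 ≤ Real.sqrt (K:ℝ) := Real.sqrt_nonneg _
    have h3 : Real.sqrt ((K:ℝ)+1) * Real.sqrt ((K:ℝ)+1) = (K:ℝ)+1 :=
      Real.mul_self_sqrt (by positivity)
    have h4 : Real.sqrt (K:ℝ) * Real.sqrt (K:ℝ) = (K:ℝ) := Real.mul_self_sqrt (by positivity)
    have key : Real.sqrt (K:ℝ) ≤ (2/3)*((K:ℝ)+1)*Real.sqrt ((K:ℝ)+1) - (2/3)*(K:ℝ)*Real.sqrt (K:ℝ) := by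
      nlinarith [sq_nonneg (Real.sqrt ((K:ℝ)+1) - Real.sqrt K), sq_nonneg (Real.sqrt ((K:ℝ)+1) + Real.sqrt K)]
    have hc : ((K+1:ℕ):ℝ) = (K:ℝ)+1 := by push_cast; ring
    rw [hc]
    linarith

lemma chain_lemma (n b : ℕ) (π : Finset (Fin n))
    (hsep : ∀ i ∈ π, ∀ j ∈ π, i ≠ j → b ≤ Nat.dist (i:ℕ) (j:ℕ)) :
    ∀ t : ℕ, ∀ i ∈ π, ∀ j ∈ π, (j:ℕ) ≤ (i:ℕ) →
      (π.filter (fun m : Fin n => (j:ℕ) < (m:ℕ) ∧ (m:ℕ) ≤ (i:ℕ))).card = t →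
      b * t ≤ (i:ℕ) - (j:ℕ) := by
  intro t
  induction t with
  | zero => intro i hi j hj hji hcard; omega
  | succ t ih =>
    intro i hi j hj hji hcard
    have hlt : (j:ℕ) < (i:ℕ) := by
      rcases Nat.lt_or_ge (j:ℕ) (i:ℕ) with h | h
      · exact h
      · exfalso
        have hji' : (j:ℕ) = (i:ℕ) := by omega
        have : (π.filter (fun m : Fin n => (j:ℕ) < (m:ℕ) ∧ (m:ℕ) ≤ (i:ℕ))) = ∅ := by
          apply Finset.filter_false_of_mem
          intro m hm
          omega
        rw [this] at hcard
        simp at hcard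
    set A := π.filter (fun m : Fin n => (j:ℕ) ≤ (m:ℕ) ∧ (m:ℕ) < (i:ℕ)) with hA
    have hjA : j ∈ A := by
      rw [hA, Finset.mem_filter]
      exact ⟨hj, le_refl _, hlt⟩
    have hAne : A.Nonempty := ⟨j, hjA⟩
    set j' := A.max' hAne with hj'
    have hj'A : j' ∈ A := A.max'_mem hAne
    rw [hA, Finset.mem_filter] at hj'A
    obtain ⟨hj'π, hjj', hj'i⟩ := hj'A
    have hmax : ∀ m ∈ A, (m:ℕ) ≤ (j':ℕ) := by
      intro m hm
      exact Fin.le_def.mp (A.le_max' m hm)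
    have hdist : b ≤ (i:ℕ) - (j':ℕ) := by
      have hne : i ≠ j' := by
        intro h; rw [h] at hj'i; omega
      have := hsep i hi j' hj'π hne
      rwa [Nat.dist_eq_sub_of_le_right (by omega)] at this
    have hset : π.filter (fun m : Fin n => (j:ℕ) < (m:ℕ) ∧ (m:ℕ) ≤ (i:ℕ))
        = insert i (π.filter (fun m : Fin n => (j:ℕ) < (m:ℕ) ∧ (m:ℕ) ≤ (j':ℕ))) := by
      ext m
      simp only [Finset.mem_insert, Finset.mem_filter]
      constructor
      · rintro ⟨hmπ, hjm, hmi⟩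
        by_cases hmi' : m = i
        · left; exact hmi'
        · right
          refine ⟨hmπ, hjm, ?_⟩
          have hmi'' : (m:ℕ) < (i:ℕ) := by
            rcases Nat.lt_or_ge (m:ℕ) (i:ℕ) with h | h
            · exact h
            · exfalso; exact hmi' (Fin.ext (by omega))
          exact hmax m (by rw [hA, Finset.mem_filter]; exact ⟨hmπ, by omega, hmi''⟩)
      · rintro (rfl | ⟨hmπ, hjm, hmj'⟩)
        · exact ⟨hi, hlt, le_refl _⟩
        · exact ⟨hmπ, hjm, by omega⟩
    have hinot : i ∉ π.filter (fun m : Fin n => (j:ℕ) < (m:ℕ) ∧ (m:ℕ) ≤ (j':ℕ)) := by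
      rw [Finset.mem_filter]
      rintro ⟨-, -, h⟩; omega
    rw [hset, Finset.card_insert_of_notMem hinot] at hcard
    have hcard' : (π.filter (fun m : Fin n => (j:ℕ) < (m:ℕ) ∧ (m:ℕ) ≤ (j':ℕ))).card = t := by omega
    have hih := ih j' hj'π j hj hjj' hcard'
    have hexp : b*(t+1) = b*t + b := by ring
    omega

lemma left_sum_le (n b : ℕ) (hb : 1 ≤ b) (π : Finset (Fin n))
    (hsep : ∀ i ∈ π, ∀ j ∈ π, i ≠ j → b ≤ Nat.dist (i:ℕ) (j:ℕ)) (i : Fin n) (hi : i ∈ π) :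
    ∑ j ∈ π.filter (fun j : Fin n => (j:ℕ) < (i:ℕ)), 1 / Real.sqrt (((i:ℕ):ℝ) - ((j:ℕ):ℝ))
      ≤ 2 * Real.sqrt ((π.filter (fun j : Fin n => (j:ℕ) < (i:ℕ))).card) / Real.sqrt b := by
  set P := π.filter (fun j : Fin n => (j:ℕ) < (i:ℕ)) with hP
  set L := P.card with hL
  set ℓ : Fin n → ℕ := fun j => (π.filter (fun m : Fin n => (j:ℕ) < (m:ℕ) ∧ (m:ℕ) ≤ (i:ℕ))).card with hℓ
  have hmemP : ∀ j, j ∈ P ↔ (j ∈ π ∧ (j:ℕ) < (i:ℕ)) := by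
    intro j; rw [hP, Finset.mem_filter]
  have hbl : ∀ j ∈ P, b * ℓ j ≤ (i:ℕ) - (j:ℕ) := by
    intro j hj
    rw [hmemP] at hj
    exact chain_lemma n b π hsep (ℓ j) i hi j hj.1 (le_of_lt hj.2) rfl
  have h1l : ∀ j ∈ P, 1 ≤ ℓ j := by
    intro j hj
    rw [hmemP] at hj
    have : i ∈ π.filter (fun m : Fin n => (j:ℕ) < (m:ℕ) ∧ (m:ℕ) ≤ (i:ℕ)) := by
      rw [Finset.mem_filter]; exact ⟨hi, hj.2, le_refl _⟩
    have hc := Finset.card_pos.mpr ⟨i, this⟩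
    simp only [hℓ]
    omega
  have hlL : ∀ j ∈ P, ℓ j ≤ L := by
    intro j hj
    have hsub : π.filter (fun m : Fin n => (j:ℕ) < (m:ℕ) ∧ (m:ℕ) ≤ (i:ℕ)) ⊆ insert i (P.erase j) := by
      intro m hm
      rw [Finset.mem_filter] at hm
      rw [Finset.mem_insert, Finset.mem_erase]
      by_cases hmi : m = i
      · left; exact hmi
      · right
        have hmi' : (m:ℕ) < (i:ℕ) := by
          rcases Nat.lt_or_ge (m:ℕ) (i:ℕ) with h | h
          · exact h
          · exact absurd (Fin.ext (by omega)) hmi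
        constructor
        · intro h; rw [h] at hm; omega
        · rw [hmemP]; exact ⟨hm.1, hmi'⟩
    have h2 := Finset.card_le_card hsub
    have h3 : (insert i (P.erase j)).card ≤ (P.erase j).card + 1 := Finset.card_insert_le _ _
    have h4 : (P.erase j).card = L - 1 := by rw [Finset.card_erase_of_mem hj, hL]
    have h5 : 1 ≤ L := by
      rw [hL]; exact Finset.card_pos.mpr ⟨j, hj⟩
    simp only [hℓ]
    omega
  have hinj : ∀ j1 ∈ P, ∀ j2 ∈ P, ℓ j1 = ℓ j2 → j1 = j2 := by
    have key : ∀ j1 ∈ P, ∀ j2 ∈ P, (j1:ℕ) < (j2:ℕ) → ℓ j2 < ℓ j1 := by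
      intro j1 hj1 j2 hj2 hlt
      rw [hmemP] at hj1 hj2
      apply Finset.card_lt_card
      constructor
      · intro m hm
        rw [Finset.mem_filter] at hm ⊢
        exact ⟨hm.1, by omega, hm.2.2⟩
      · intro hcon
        have : j2 ∈ π.filter (fun m : Fin n => ((j2:ℕ) < (m:ℕ) ∧ (m:ℕ) ≤ (i:ℕ))) := by
          apply hcon
          rw [Finset.mem_filter]
          exact ⟨hj2.1, hlt, le_of_lt hj2.2⟩
        rw [Finset.mem_filter] at this
        omega
    intro j1 hj1 j2 hj2 heq
    rcases Nat.lt_trichotomy (j1:ℕ) (j2:ℕ) with h | h | h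
    · have := key j1 hj1 j2 hj2 h; omega
    · exact Fin.ext h
    · have := key j2 hj2 j1 hj1 h; omega
  have hbpos : (0:ℝ) < Real.sqrt b := Real.sqrt_pos.mpr (by positivity)
  have step1 : ∑ j ∈ P, 1 / Real.sqrt (((i:ℕ):ℝ) - ((j:ℕ):ℝ))
      ≤ ∑ j ∈ P, 1 / Real.sqrt ((b:ℝ) * (ℓ j)) := by
    apply Finset.sum_le_sum
    intro j hj
    have h1 := hbl j hj
    have h2 := h1l j hj
    have hjlt : (j:ℕ) < (i:ℕ) := ((hmemP j).mp hj).2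
    have hpos : (0:ℝ) < (b:ℝ) * (ℓ j) := by
      have : (1:ℝ) ≤ (ℓ j : ℝ) := by exact_mod_cast h2
      have hb' : (1:ℝ) ≤ (b:ℝ) := by exact_mod_cast hb
      nlinarith
    have hle : (b:ℝ) * (ℓ j) ≤ ((i:ℕ):ℝ) - ((j:ℕ):ℝ) := by
      have : ((b * ℓ j : ℕ):ℝ) ≤ (((i:ℕ) - (j:ℕ) : ℕ):ℝ) := by exact_mod_cast h1
      push_cast at this
      rw [Nat.cast_sub (le_of_lt hjlt)] at this
      push_cast at this
      linarith
    exact one_div_le_one_div_of_le (Real.sqrt_pos.mpr hpos) (Real.sqrt_le_sqrt hle)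
  have step2 : ∑ j ∈ P, 1 / Real.sqrt ((b:ℝ) * (ℓ j)) = ∑ l ∈ P.image ℓ, 1 / Real.sqrt ((b:ℝ) * l) := by
    rw [Finset.sum_image hinj]
  have step3 : ∑ l ∈ P.image ℓ, 1 / Real.sqrt ((b:ℝ) * l)
      ≤ ∑ l ∈ Finset.Icc 1 L, 1 / Real.sqrt ((b:ℝ) * l) := by
    apply Finset.sum_le_sum_of_subset_of_nonneg
    · intro l hl
      rw [Finset.mem_image] at hl
      obtain ⟨j, hj, rfl⟩ := hl
      rw [Finset.mem_Icc]
      exact ⟨h1l j hj, hlL j hj⟩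
    · intro l _ _; positivity
  have step4 : ∑ l ∈ Finset.Icc 1 L, 1 / Real.sqrt ((b:ℝ) * l)
      = ∑ m ∈ Finset.range L, 1 / Real.sqrt ((b:ℝ) * (m+1)) := by
    rw [← Finset.Ico_add_one_right_eq_Icc, Finset.sum_Ico_eq_sum_range]
    apply Finset.sum_congr (by norm_num)
    intro m _
    congr 2
    push_cast
    ring
  have step5 : ∑ m ∈ Finset.range L, 1 / Real.sqrt ((b:ℝ) * (m+1))
      ≤ 2 * Real.sqrt L / Real.sqrt b := by
    have : ∀ m : ℕ, 1 / Real.sqrt ((b:ℝ) * (m+1)) = (1 / Real.sqrt b) * (1 / Real.sqrt ((m:ℝ)+1)) := by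
      intro m
      rw [Real.sqrt_mul (by positivity)]
      field_simp
    simp only [this]
    rw [← Finset.mul_sum]
    have h6 := invsqrt_sum_le L
    have h7 : (0:ℝ) < 1 / Real.sqrt b := by positivity
    calc (1 / Real.sqrt b) * ∑ m ∈ Finset.range L, 1 / Real.sqrt ((m:ℝ)+1)
        ≤ (1 / Real.sqrt b) * (2 * Real.sqrt L) := mul_le_mul_of_nonneg_left h6 h7.le
      _ = 2 * Real.sqrt L / Real.sqrt b := by ring
  calc ∑ j ∈ P, 1 / Real.sqrt (((i:ℕ):ℝ) - ((j:ℕ):ℝ)) ≤ _ := step1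
    _ = _ := step2
    _ ≤ _ := step3
    _ = _ := step4
    _ ≤ 2 * Real.sqrt L / Real.sqrt b := step5

/-- The square root factor `C_{1,β}`, lower triangular Toeplitz with entries `c_{i-j}`. -/
noncomputable def Cmat1 (n : ℕ) (β : ℝ) : Matrix (Fin n) (Fin n) ℝ :=
  Matrix.of fun i j => if (j : ℕ) ≤ (i : ℕ) then cCoef1 β ((i : ℕ) - (j : ℕ)) else 0

lemma sum_shift_le (n : ℕ) (i : Fin n) (g : ℕ → ℝ) (hg : ∀ m, 0 ≤ g m) :
    ∑ t : Fin n, (if (i:ℕ) ≤ (t:ℕ) then g ((t:ℕ) - (i:ℕ)) else 0) ≤ ∑ m ∈ Finset.range n, g m := by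
  rw [Fin.sum_univ_eq_sum_range (fun t => if (i:ℕ) ≤ t then g (t - (i:ℕ)) else 0) n]
  rw [← Finset.sum_filter]
  have hfil : (Finset.range n).filter (fun t => (i:ℕ) ≤ t) = Finset.Ico (i:ℕ) n := by
    ext m; simp [Finset.mem_Ico, Finset.mem_filter, Finset.mem_range]; omega
  rw [hfil, Finset.sum_Ico_eq_sum_range]
  have : ∀ m ∈ Finset.range (n - (i:ℕ)), g ((i:ℕ) + m - (i:ℕ)) = g m := by
    intro m _; congr 1; omega
  rw [Finset.sum_congr rfl this]
  apply Finset.sum_le_sum_of_subset_of_nonneg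
  · apply Finset.range_subset_range.mpr; omega
  · intro m _ _; exact hg m

lemma G_apply (n : ℕ) (β : ℝ) (i j : Fin n) :
    ((Cmat1 n β)ᵀ * Cmat1 n β) i j
      = ∑ t : Fin n, (if (i:ℕ) ≤ (t:ℕ) then cCoef1 β ((t:ℕ) - (i:ℕ)) else 0)
          * (if (j:ℕ) ≤ (t:ℕ) then cCoef1 β ((t:ℕ) - (j:ℕ)) else 0) := by
  rw [Matrix.mul_apply]
  apply Finset.sum_congr rfl
  intro t _
  rw [Matrix.transpose_apply]
  rfl

lemma G_nonneg (n : ℕ) (β : ℝ) (hβ0 : 0 ≤ β) (i j : Fin n) :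
    0 ≤ ((Cmat1 n β)ᵀ * Cmat1 n β) i j := by
  rw [G_apply]
  apply Finset.sum_nonneg
  intro t _
  apply mul_nonneg <;> { split_ifs with h; exacts [cCoef1_nonneg β hβ0 _, le_refl 0] }

lemma G_symm (n : ℕ) (β : ℝ) (i j : Fin n) :
    ((Cmat1 n β)ᵀ * Cmat1 n β) i j = ((Cmat1 n β)ᵀ * Cmat1 n β) j i := by
  rw [G_apply, G_apply]
  apply Finset.sum_congr rfl
  intro t _
  ring

lemma Gdiag_le (n : ℕ) (hn : 1 ≤ n) (β : ℝ) (hβ0 : 0 ≤ β) (hβ1 : β < 1) (i : Fin n) :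
    ((Cmat1 n β)ᵀ * Cmat1 n β) i i ≤ (Real.log n + 1) / (1 - β)^2 := by
  have hβ' : (0:ℝ) < 1 - β := by linarith
  rw [G_apply]
  have h1 : ∑ t : Fin n, (if (i:ℕ) ≤ (t:ℕ) then cCoef1 β ((t:ℕ) - (i:ℕ)) else 0)
          * (if (i:ℕ) ≤ (t:ℕ) then cCoef1 β ((t:ℕ) - (i:ℕ)) else 0)
      = ∑ t : Fin n, (if (i:ℕ) ≤ (t:ℕ) then cCoef1 β ((t:ℕ) - (i:ℕ)) ^ 2 else 0) := by
    apply Finset.sum_congr rfl; intro t _; split_ifs <;> ring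
  rw [h1]
  have h2 := sum_shift_le n i (fun m => cCoef1 β m ^ 2) (fun m => sq_nonneg _)
  refine le_trans h2 ?_
  have h3 : ∀ m ∈ Finset.range n, cCoef1 β m ^ 2 ≤ (1/(1-β)^2) * (1/((m:ℝ)+1)) := by
    intro m _
    have hc0 := cCoef1_nonneg β hβ0 m
    have hc1 := cCoef1_le_inv_sqrt β hβ0 hβ1 m
    have hs : Real.sqrt ((m:ℝ)+1) ^ 2 = (m:ℝ)+1 := Real.sq_sqrt (by positivity)
    have hsp : (0:ℝ) < Real.sqrt ((m:ℝ)+1) := Real.sqrt_pos.mpr (by positivity)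
    have : cCoef1 β m ^ 2 ≤ (1 / ((1 - β) * Real.sqrt ((m:ℝ)+1))) ^ 2 := by
      apply pow_le_pow_left₀ hc0 hc1
    refine le_trans this (le_of_eq ?_)
    rw [div_pow, mul_pow, hs]
    field_simp
  refine le_trans (Finset.sum_le_sum h3) ?_
  rw [← Finset.mul_sum]
  have h4 := harmonic_le n hn
  have h5 : (0:ℝ) ≤ 1/(1-β)^2 := by positivity
  calc (1/(1-β)^2) * ∑ m ∈ Finset.range n, (1:ℝ)/((m:ℝ)+1)
      ≤ (1/(1-β)^2) * (Real.log n + 1) := mul_le_mul_of_nonneg_left h4 h5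
    _ = (Real.log n + 1) / (1-β)^2 := by ring

lemma Goff_le (n : ℕ) (β : ℝ) (hβ0 : 0 ≤ β) (hβ1 : β < 1) (i j : Fin n) (hji : (j:ℕ) < (i:ℕ)) :
    ((Cmat1 n β)ᵀ * Cmat1 n β) i j
      ≤ (2 * Real.sqrt n / (1-β)^2) * (1 / Real.sqrt (((i:ℕ):ℝ) - ((j:ℕ):ℝ))) := by
  have hβ' : (0:ℝ) < 1 - β := by linarith
  have hd : (0:ℝ) < ((i:ℕ):ℝ) - ((j:ℕ):ℝ) := by
    have : ((j:ℕ):ℝ) < ((i:ℕ):ℝ) := by exact_mod_cast hji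
    linarith
  have hds : (0:ℝ) < Real.sqrt (((i:ℕ):ℝ) - ((j:ℕ):ℝ)) := Real.sqrt_pos.mpr hd
  set K : ℝ := 1 / ((1-β) * Real.sqrt (((i:ℕ):ℝ) - ((j:ℕ):ℝ))) with hK
  have hK0 : 0 ≤ K := by positivity
  rw [G_apply]
  have step1 : ∀ t : Fin n,
      (if (i:ℕ) ≤ (t:ℕ) then cCoef1 β ((t:ℕ) - (i:ℕ)) else 0)
          * (if (j:ℕ) ≤ (t:ℕ) then cCoef1 β ((t:ℕ) - (j:ℕ)) else 0)
      ≤ (if (i:ℕ) ≤ (t:ℕ) then (1 / ((1-β) * Real.sqrt ((((t:ℕ) - (i:ℕ) : ℕ):ℝ)+1))) * K else 0) := by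
    intro t
    by_cases hit : (i:ℕ) ≤ (t:ℕ)
    · have hjt : (j:ℕ) ≤ (t:ℕ) := by omega
      rw [if_pos hit, if_pos hit, if_pos hjt]
      have hc1 := cCoef1_le_inv_sqrt β hβ0 hβ1 ((t:ℕ) - (i:ℕ))
      have hc2 := cCoef1_le_inv_sqrt β hβ0 hβ1 ((t:ℕ) - (j:ℕ))
      have hc2' : cCoef1 β ((t:ℕ) - (j:ℕ)) ≤ K := by
        refine le_trans hc2 ?_
        rw [hK]
        have h1 : (i:ℕ) - (j:ℕ) ≤ ((t:ℕ) - (j:ℕ)) + 1 := by omega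
        have h2 : (((i:ℕ):ℝ) - ((j:ℕ):ℝ)) ≤ (((t:ℕ) - (j:ℕ) :ℕ):ℝ) + 1 := by
          rw [← Nat.cast_sub (le_of_lt hji)]
          exact_mod_cast h1
        apply one_div_le_one_div_of_le (by positivity)
        exact mul_le_mul_of_nonneg_left (Real.sqrt_le_sqrt h2) hβ'.le
      apply mul_le_mul hc1 hc2' (cCoef1_nonneg β hβ0 _) (by positivity)
    · simp [hit]
  refine le_trans (Finset.sum_le_sum (fun t _ => step1 t)) ?_
  have step2 := sum_shift_le n i (fun m => (1 / ((1-β) * Real.sqrt ((m:ℝ)+1))) * K)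
    (fun m => by positivity)
  refine le_trans (le_trans (le_of_eq ?_) step2) ?_
  · apply Finset.sum_congr rfl
    intro t _
    rfl
  · have he : ∀ m : ℕ, (1 / ((1-β) * Real.sqrt ((m:ℝ)+1))) * K
        = (K / (1-β)) * (1 / Real.sqrt ((m:ℝ)+1)) := by
      intro m
      have : (0:ℝ) < Real.sqrt ((m:ℝ)+1) := Real.sqrt_pos.mpr (by positivity)
      field_simp
    rw [Finset.sum_congr rfl (fun m _ => he m), ← Finset.mul_sum]
    have h6 := invsqrt_sum_le n
    have h7 : (0:ℝ) ≤ K / (1-β) := by positivity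
    calc (K/(1-β)) * ∑ m ∈ Finset.range n, 1 / Real.sqrt ((m:ℝ)+1)
        ≤ (K/(1-β)) * (2 * Real.sqrt n) := mul_le_mul_of_nonneg_left h6 h7
      _ = (2 * Real.sqrt n / (1-β)^2) * (1 / Real.sqrt (((i:ℕ):ℝ) - ((j:ℕ):ℝ))) := by
          have hKd : K / (1-β) = 1/((1-β)^2 * Real.sqrt (((i:ℕ):ℝ) - ((j:ℕ):ℝ))) := by
            rw [hK, div_div]
            congr 1
            ring
          rw [hKd, one_div, mul_inv]
          ring

lemma sum_split (n : ℕ) (π : Finset (Fin n)) (i : Fin n) (hi : i ∈ π) (f : Fin n → ℝ) :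
    ∑ j ∈ π, f j = f i + ∑ j ∈ π.filter (fun j : Fin n => (j:ℕ) < (i:ℕ)), f j
      + ∑ j ∈ π.filter (fun j : Fin n => (i:ℕ) < (j:ℕ)), f j := by
  rw [← Finset.sum_filter_add_sum_filter_not π (fun j : Fin n => (j:ℕ) < (i:ℕ)) f]
  have h1 : π.filter (fun j : Fin n => ¬ (j:ℕ) < (i:ℕ)) =
      insert i (π.filter (fun j : Fin n => (i:ℕ) < (j:ℕ))) := by
    ext m
    simp only [Finset.mem_insert, Finset.mem_filter]
    constructor
    · rintro ⟨hm, h⟩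
      rcases Nat.lt_or_ge (i:ℕ) (m:ℕ) with h2 | h2
      · right; exact ⟨hm, h2⟩
      · left; exact Fin.ext (by omega)
    · rintro (rfl | ⟨hm, h⟩)
      · exact ⟨hi, by omega⟩
      · exact ⟨hm, by omega⟩
  rw [h1, Finset.sum_insert (by rw [Finset.mem_filter]; rintro ⟨-, h⟩; omega)]
  ring

lemma offlow_swap (n : ℕ) (β : ℝ) (π : Finset (Fin n)) :
    ∑ i ∈ π, ∑ j ∈ π.filter (fun j : Fin n => (i:ℕ) < (j:ℕ)), ((Cmat1 n β)ᵀ * Cmat1 n β) i j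
      = ∑ i ∈ π, ∑ j ∈ π.filter (fun j : Fin n => (j:ℕ) < (i:ℕ)), ((Cmat1 n β)ᵀ * Cmat1 n β) i j := by
  rw [Finset.sum_comm' (t' := π) (s' := fun j => π.filter (fun i : Fin n => (i:ℕ) < (j:ℕ))) (f := fun i j => ((Cmat1 n β)ᵀ * Cmat1 n β) i j)]
  · apply Finset.sum_congr rfl
    intro i _
    apply Finset.sum_congr rfl
    intro j _
    exact G_symm n β j i
  · intro x y
    simp only [Finset.mem_filter]
    tauto

lemma key_bound (β : ℝ) (hβ0 : 0 ≤ β) (hβ1 : β < 1)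
    (n b k : ℕ) (hn : 1 ≤ n) (hb : 1 ≤ b) (hk : 1 ≤ k) (hkb : k * b = n)
    (π : Finset (Fin n)) (hcard : π.card ≤ k)
    (hsep : ∀ i ∈ π, ∀ j ∈ π, i ≠ j → b ≤ Nat.dist (i:ℕ) (j:ℕ)) :
    ∑ i ∈ π, ∑ j ∈ π, ((Cmat1 n β)ᵀ * Cmat1 n β) i j ≤
      (k:ℝ) * (Real.log n + 1) / (1-β)^2 + 6 * (k:ℝ)^2 / (1-β)^2 := by
  have hβ' : (0:ℝ) < 1 - β := by linarith
  have hlog : (0:ℝ) ≤ Real.log n := Real.log_nonneg (by exact_mod_cast hn)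
  set G := (Cmat1 n β)ᵀ * Cmat1 n β with hG
  have hsplit : ∑ i ∈ π, ∑ j ∈ π, G i j
      = ∑ i ∈ π, G i i
        + (∑ i ∈ π, ∑ j ∈ π.filter (fun j : Fin n => (j:ℕ) < (i:ℕ)), G i j
           + ∑ i ∈ π, ∑ j ∈ π.filter (fun j : Fin n => (i:ℕ) < (j:ℕ)), G i j) := by
    rw [← Finset.sum_add_distrib, ← Finset.sum_add_distrib]
    apply Finset.sum_congr rfl
    intro i hi
    rw [sum_split n π i hi (fun j => G i j)]
    ring
  rw [hsplit, offlow_swap n β π]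
  -- diagonal part
  have hdiag : ∑ i ∈ π, G i i ≤ (k:ℝ) * (Real.log n + 1) / (1-β)^2 := by
    calc ∑ i ∈ π, G i i ≤ ∑ i ∈ π, (Real.log n + 1) / (1-β)^2 :=
          Finset.sum_le_sum (fun i _ => Gdiag_le n hn β hβ0 hβ1 i)
      _ = (π.card : ℝ) * ((Real.log n + 1) / (1-β)^2) := by
          rw [Finset.sum_const, nsmul_eq_mul]
      _ ≤ (k:ℝ) * ((Real.log n + 1) / (1-β)^2) := by
          apply mul_le_mul_of_nonneg_right _ (by positivity)
          exact_mod_cast hcard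
      _ = (k:ℝ) * (Real.log n + 1) / (1-β)^2 := by ring
  -- off-diagonal part
  have hoff : ∑ i ∈ π, ∑ j ∈ π.filter (fun j : Fin n => (j:ℕ) < (i:ℕ)), G i j
      ≤ (2 * Real.sqrt n / (1-β)^2) * (2 / Real.sqrt b) * ((2/3) * k * Real.sqrt k) := by
    have hsqb : (0:ℝ) < Real.sqrt b := Real.sqrt_pos.mpr (by positivity)
    have step1 : ∀ i ∈ π, ∑ j ∈ π.filter (fun j : Fin n => (j:ℕ) < (i:ℕ)), G i j
        ≤ (2 * Real.sqrt n / (1-β)^2) * (2 * Real.sqrt ((π.filter (fun j : Fin n => (j:ℕ) < (i:ℕ))).card) / Real.sqrt b) := by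
      intro i hi
      have h1 : ∑ j ∈ π.filter (fun j : Fin n => (j:ℕ) < (i:ℕ)), G i j
          ≤ ∑ j ∈ π.filter (fun j : Fin n => (j:ℕ) < (i:ℕ)),
              (2 * Real.sqrt n / (1-β)^2) * (1 / Real.sqrt (((i:ℕ):ℝ) - ((j:ℕ):ℝ))) := by
        apply Finset.sum_le_sum
        intro j hj
        rw [Finset.mem_filter] at hj
        exact Goff_le n β hβ0 hβ1 i j hj.2
      refine le_trans h1 ?_
      rw [← Finset.mul_sum]
      apply mul_le_mul_of_nonneg_left _ (by positivity)
      exact left_sum_le n b hb π hsep i hi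
    calc ∑ i ∈ π, ∑ j ∈ π.filter (fun j : Fin n => (j:ℕ) < (i:ℕ)), G i j
        ≤ ∑ i ∈ π, (2 * Real.sqrt n / (1-β)^2) * (2 * Real.sqrt ((π.filter (fun j : Fin n => (j:ℕ) < (i:ℕ))).card) / Real.sqrt b) :=
          Finset.sum_le_sum step1
      _ = (2 * Real.sqrt n / (1-β)^2) * (2 / Real.sqrt b)
            * ∑ i ∈ π, Real.sqrt ((π.filter (fun j : Fin n => (j:ℕ) < (i:ℕ))).card) := by
          rw [Finset.mul_sum]
          apply Finset.sum_congr rfl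
          intro i _
          ring
      _ ≤ (2 * Real.sqrt n / (1-β)^2) * (2 / Real.sqrt b) * ((2/3) * k * Real.sqrt k) := by
          apply mul_le_mul_of_nonneg_left _ (by positivity)
          -- sum of sqrt of L_i
          set L : Fin n → ℕ := fun i => (π.filter (fun j : Fin n => (j:ℕ) < (i:ℕ))).card with hLdef
          have hinj : ∀ i1 ∈ π, ∀ i2 ∈ π, L i1 = L i2 → i1 = i2 := by
            have key : ∀ i1 ∈ π, ∀ i2 ∈ π, (i1:ℕ) < (i2:ℕ) → L i1 < L i2 := by
              intro i1 h1 i2 h2 hlt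
              apply Finset.card_lt_card
              constructor
              · intro m hm
                rw [Finset.mem_filter] at hm ⊢
                exact ⟨hm.1, by omega⟩
              · intro hcon
                have : i1 ∈ π.filter (fun j : Fin n => (j:ℕ) < (i1:ℕ)) := by
                  apply hcon
                  rw [Finset.mem_filter]
                  exact ⟨h1, hlt⟩
                rw [Finset.mem_filter] at this
                omega
            intro i1 h1 i2 h2 heq
            rcases Nat.lt_trichotomy (i1:ℕ) (i2:ℕ) with h | h | h
            · have := key i1 h1 i2 h2 h; omega
            · exact Fin.ext h
            · have := key i2 h2 i1 h1 h; omega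
          have hLlt : ∀ i ∈ π, L i < π.card := by
            intro i hi
            apply Finset.card_lt_card
            constructor
            · intro m hm; exact (Finset.mem_filter.mp hm).1
            · intro hcon
              have : i ∈ π.filter (fun j : Fin n => (j:ℕ) < (i:ℕ)) := hcon hi
              rw [Finset.mem_filter] at this
              omega
          calc ∑ i ∈ π, Real.sqrt (L i) = ∑ l ∈ π.image L, Real.sqrt l := by
                rw [Finset.sum_image hinj]
            _ ≤ ∑ l ∈ Finset.range k, Real.sqrt l := by
                apply Finset.sum_le_sum_of_subset_of_nonneg
                · intro l hl
                  rw [Finset.mem_image] at hl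
                  obtain ⟨i, hi, rfl⟩ := hl
                  rw [Finset.mem_range]
                  have := hLlt i hi
                  omega
                · intro l _ _; exact Real.sqrt_nonneg _
            _ ≤ (2/3) * k * Real.sqrt k := sqrtsum_le k
  -- combine
  have hfinal : (2 * Real.sqrt n / (1-β)^2) * (2 / Real.sqrt b) * ((2/3) * k * Real.sqrt k)
      + (2 * Real.sqrt n / (1-β)^2) * (2 / Real.sqrt b) * ((2/3) * k * Real.sqrt k)
      ≤ 6 * (k:ℝ)^2 / (1-β)^2 := by
    have hsqb : (0:ℝ) < Real.sqrt b := Real.sqrt_pos.mpr (by positivity)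
    have hsqk : (0:ℝ) ≤ Real.sqrt k := Real.sqrt_nonneg _
    have hsn : Real.sqrt n = Real.sqrt k * Real.sqrt b := by
      rw [← Real.sqrt_mul (by positivity)]
      congr 1
      rw [← hkb]
      push_cast
      ring
    have hkk : Real.sqrt k * Real.sqrt k = (k:ℝ) := Real.mul_self_sqrt (by positivity)
    rw [hsn]
    have hexp : (2 * (Real.sqrt k * Real.sqrt b) / (1-β)^2) * (2 / Real.sqrt b) * ((2/3) * k * Real.sqrt k)
        = (8/3) * ((k:ℝ) * k) / (1-β)^2 := by
      have he2 : (2 * (Real.sqrt k * Real.sqrt b) / (1-β)^2) * (2 / Real.sqrt b) * ((2/3) * k * Real.sqrt k)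
          = (Real.sqrt k * Real.sqrt k) * (Real.sqrt b / Real.sqrt b) * ((8/3) * k) / (1-β)^2 := by
        ring
      rw [he2, hkk, div_self (ne_of_gt hsqb)]
      ring
    rw [hexp]
    rw [← add_div, div_le_div_iff₀ (by positivity) (by positivity)]
    have hk1 : (1:ℝ) ≤ (k:ℝ) := by exact_mod_cast hk
    nlinarith [sq_nonneg ((1:ℝ)-β), sq_nonneg ((k:ℝ))]
  calc ∑ i ∈ π, G i i
        + (∑ i ∈ π, ∑ j ∈ π.filter (fun j : Fin n => (j:ℕ) < (i:ℕ)), G i j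
           + ∑ i ∈ π, ∑ j ∈ π.filter (fun j : Fin n => (j:ℕ) < (i:ℕ)), G i j)
      ≤ (k:ℝ) * (Real.log n + 1) / (1-β)^2
        + ((2 * Real.sqrt n / (1-β)^2) * (2 / Real.sqrt b) * ((2/3) * k * Real.sqrt k)
           + (2 * Real.sqrt n / (1-β)^2) * (2 / Real.sqrt b) * ((2/3) * k * Real.sqrt k)) := by
        apply add_le_add hdiag (add_le_add hoff hoff)
    _ ≤ (k:ℝ) * (Real.log n + 1) / (1-β)^2 + 6 * (k:ℝ)^2 / (1-β)^2 := by
        exact add_le_add (le_refl _) hfinal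

/-- The `b`-min-separated `L2`-sensitivity with at most `k` participations. -/
noncomputable def sens (n b k : ℕ) (C : Matrix (Fin n) (Fin n) ℝ) : ℝ :=
  Real.sqrt (sSup { x : ℝ | ∃ π : Finset (Fin n), π.card ≤ k ∧
    (∀ i ∈ π, ∀ j ∈ π, i ≠ j → b ≤ Nat.dist (i : ℕ) (j : ℕ)) ∧
    x = ∑ i ∈ π, ∑ j ∈ π, (Cᵀ * C) i j })

/-- for `k·b = n`,
`sens_{k,b}(C_{1,β})² ≤ k·(log n + 1)/(1 − β)² + 6·k²/(1 − β)²`. -/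
theorem sens_square_root_upper_bound (β : ℝ) (hβ0 : 0 ≤ β) (hβ1 : β < 1)
    (n b k : ℕ) (hn : 1 ≤ n) (hb : 1 ≤ b) (hk : 1 ≤ k) (hkb : k * b = n) :
    sens n b k (Cmat1 n β) ^ 2 ≤
      (k : ℝ) * (Real.log n + 1) / (1 - β) ^ 2 + 6 * (k : ℝ) ^ 2 / (1 - β) ^ 2 := by
  have hβ' : (0:ℝ) < 1 - β := by linarith
  have hlog : (0:ℝ) ≤ Real.log n := Real.log_nonneg (by exact_mod_cast hn)
  set B : ℝ := (k : ℝ) * (Real.log n + 1) / (1 - β) ^ 2 + 6 * (k : ℝ) ^ 2 / (1 - β) ^ 2 with hB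
  have hB0 : 0 ≤ B := by
    rw [hB]
    have h1 : (0:ℝ) ≤ (k : ℝ) * (Real.log n + 1) / (1 - β) ^ 2 := by
      apply div_nonneg _ (by positivity)
      apply mul_nonneg (by positivity)
      linarith
    have h2 : (0:ℝ) ≤ 6 * (k : ℝ) ^ 2 / (1 - β) ^ 2 := by positivity
    linarith
  rw [sens]
  have hsup : sSup { x : ℝ | ∃ π : Finset (Fin n), π.card ≤ k ∧
      (∀ i ∈ π, ∀ j ∈ π, i ≠ j → b ≤ Nat.dist (i : ℕ) (j : ℕ)) ∧
      x = ∑ i ∈ π, ∑ j ∈ π, ((Cmat1 n β)ᵀ * Cmat1 n β) i j } ≤ B := by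
    apply Real.sSup_le _ hB0
    rintro x ⟨π, hcard, hsep, rfl⟩
    exact key_bound β hβ0 hβ1 n b k hn hb hk hkb π hcard hsep
  calc Real.sqrt (sSup _) ^ 2 ≤ Real.sqrt B ^ 2 := by
        apply pow_le_pow_left₀ (Real.sqrt_nonneg _)
        exact Real.sqrt_le_sqrt hsup
    _ = B := Real.sq_sqrt hB0
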